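/- Let n = 2^m − 1, let α be a primitive element of F_{2^m}, and let 0 ≤ r ≤ m−1. For x ∈ F_{2^m}, let coords(x) ∈ F_2^m be the coordinates of x with respect to the basis (1, α, …, α^{m−1}). Then the code R(r,m)* = { ( f(coords(α^0)), …, f(coords(α^{n−1})) ) : f multilinear over F_2 of degree ≤ r } equals the binary BCH code { (c_0, …, c_{n−1}) ∈ F_2^n : ∑_{i=0}^{n−1} ι(c_i)·α^{h·i} = 0 for every integer h with 1 ≤ wt₂(h) ≤ m − r − 1 }, i.e., the cyclic code whose generator polynomial is ∏_{h : 1 ≤ wt₂(h) ≤ m−r−1} (x − α^h); its defining set is the union of the cyclotomic cosets K_i with 0 < wt₂(i) < m − r. Hence the punctured Reed-Muller code of order r is, after this reordering of coordinates, a BCH code. -/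

import Mathlib

/-- A multilinear (Boolean) polynomial: every variable occurs with exponent at
most one in every monomial. -/
def IsMultilinear {m : ℕ} (f : MvPolynomial (Fin m) (ZMod 2)) : Prop :=
  ∀ s ∈ f.support, ∀ i, s i ≤ 1

/-- The binary digit sum (number of ones in the binary expansion). -/
def wt2 (h : ℕ) : ℕ := (Nat.digits 2 h).sum


lemma wt2_zero : wt2 0 = 0 := by simp [wt2]

lemma wt2_bit (x c : ℕ) (hc : c < 2) : wt2 (2 * x + c) = c + wt2 x := by
  rcases Nat.eq_zero_or_pos (2 * x + c) with h | h
  · have hx : x = 0 := by omega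
    have hc0 : c = 0 := by omega
    simp [hx, hc0, wt2]
  · unfold wt2
    rw [Nat.digits_def' (by norm_num : (1:ℕ) < 2) h]
    have h1 : (2 * x + c) % 2 = c := by omega
    have h2 : (2 * x + c) / 2 = x := by omega
    rw [h1, h2, List.sum_cons]

lemma wt2_rec (h : ℕ) : wt2 h = h % 2 + wt2 (h / 2) := by
  have := wt2_bit (h / 2) (h % 2) (Nat.mod_lt _ (by norm_num))
  rwa [Nat.div_add_mod] at this

lemma wt2_pos {h : ℕ} (hh : 0 < h) : 0 < wt2 h := by
  induction h using Nat.strong_induction_on with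
  | _ h ih =>
    rw [wt2_rec]
    rcases Nat.eq_zero_or_pos (h % 2) with h2 | h2
    · have : 0 < h / 2 := by omega
      have := ih (h / 2) (by omega) this
      omega
    · omega

lemma wt2_eq_zero {h : ℕ} (hh : wt2 h = 0) : h = 0 := by
  by_contra hc
  have := wt2_pos (Nat.pos_of_ne_zero hc)
  omega

lemma wt2_two_mul (h : ℕ) : wt2 (2 * h) = wt2 h := by
  have := wt2_bit h 0 (by norm_num)
  simpa using this

lemma wt2_pow_mul (j h : ℕ) : wt2 (2 ^ j * h) = wt2 h := by
  induction j with
  | zero => simp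
  | succ j ih =>
    have : 2 ^ (j+1) * h = 2 * (2 ^ j * h) := by ring
    rw [this, wt2_two_mul, ih]

lemma wt2_add_le : ∀ N a b : ℕ, a + b ≤ N → wt2 (a + b) ≤ wt2 a + wt2 b := by
  intro N
  induction N with
  | zero =>
    intro a b h
    have ha : a = 0 := by omega
    have hb : b = 0 := by omega
    simp [ha, hb, wt2_zero]
  | succ N ih =>
    intro a b h
    rcases Nat.eq_zero_or_pos a with ha | ha
    · simp [ha]
    rcases Nat.eq_zero_or_pos b with hb | hb
    · simp [hb]
    have ea : a = 2 * (a / 2) + a % 2 := by omega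
    have eb : b = 2 * (b / 2) + b % 2 := by omega
    have ha2 : a % 2 < 2 := by omega
    have hb2 : b % 2 < 2 := by omega
    rcases Nat.lt_or_ge (a % 2 + b % 2) 2 with hcase | hcase
    · have eab : a + b = 2 * (a / 2 + b / 2) + (a % 2 + b % 2) := by omega
      rw [eab, wt2_bit _ _ hcase]
      have h1 : wt2 (a / 2 + b / 2) ≤ wt2 (a / 2) + wt2 (b / 2) := by
        apply ih; omega
      calc a % 2 + b % 2 + wt2 (a / 2 + b / 2)
          ≤ a % 2 + b % 2 + (wt2 (a / 2) + wt2 (b / 2)) := by omega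
        _ = (a % 2 + wt2 (a / 2)) + (b % 2 + wt2 (b / 2)) := by omega
        _ = wt2 a + wt2 b := by
            conv_rhs => rw [ea, eb, wt2_bit _ _ ha2, wt2_bit _ _ hb2]
    · -- both odd
      have hao : a % 2 = 1 := by omega
      have hbo : b % 2 = 1 := by omega
      have eab : a + b = 2 * (a / 2 + b / 2 + 1) + 0 := by omega
      rw [eab, wt2_bit _ _ (by norm_num)]
      have h1 : wt2 (a / 2 + b / 2 + 1) ≤ wt2 (a / 2 + b / 2) + wt2 1 := by
        apply ih (a / 2 + b / 2) 1; omega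
      have h2 : wt2 (a / 2 + b / 2) ≤ wt2 (a / 2) + wt2 (b / 2) := by
        apply ih; omega
      have h3 : wt2 1 = 1 := by simp [wt2]
      have h4 : wt2 a = 1 + wt2 (a / 2) := by
        conv_lhs => rw [ea, wt2_bit _ _ ha2]
        omega
      have h5 : wt2 b = 1 + wt2 (b / 2) := by
        conv_lhs => rw [eb, wt2_bit _ _ hb2]
        omega
      omega

lemma wt2_append {k : ℕ} : ∀ a b : ℕ, a < 2 ^ k → wt2 (a + 2 ^ k * b) = wt2 a + wt2 b := by
  induction k with
  | zero =>
    intro a b h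
    have ha : a = 0 := by omega
    simp [ha, wt2_zero]
  | succ k ih =>
    intro a b h
    have e : a + 2 ^ (k+1) * b = 2 * (a / 2 + 2 ^ k * b) + a % 2 := by
      have h2 : 2 ^ (k+1) * b = 2 * (2 ^ k * b) := by ring
      omega
    rw [e, wt2_bit _ _ (by omega), ih (a / 2) b (by omega)]
    have : wt2 a = a % 2 + wt2 (a / 2) := wt2_rec a
    omega

lemma wt2_pow_sub_one (m : ℕ) : wt2 (2 ^ m - 1) = m := by
  induction m with
  | zero => simp [wt2]
  | succ m ih =>
    have e : 2 ^ (m+1) - 1 = 2 * (2 ^ m - 1) + 1 := by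
      have : 1 ≤ 2 ^ m := Nat.one_le_two_pow
      omega
    rw [e, wt2_bit _ _ (by norm_num), ih]
    omega

lemma wt2_lt_pow {m : ℕ} : ∀ k, k < 2 ^ m → wt2 k ≤ m := by
  induction m with
  | zero => intro k h; interval_cases k; simp [wt2]
  | succ m ih =>
    intro k h
    rw [wt2_rec]
    have := ih (k / 2) (by omega)
    omega

lemma wt2_fold {m : ℕ} (hm : 1 ≤ m) :
    ∀ h, 0 < h → ∃ k, 0 < k ∧ k < 2 ^ m ∧ k % (2 ^ m - 1) = h % (2 ^ m - 1) ∧ wt2 k ≤ wt2 h := by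
  intro h
  induction h using Nat.strong_induction_on with
  | _ h ih =>
    intro hh
    have h2m : 2 ≤ 2 ^ m := by
      calc 2 = 2 ^ 1 := by norm_num
        _ ≤ 2 ^ m := Nat.pow_le_pow_right (by norm_num) hm
    rcases Nat.lt_or_ge h (2 ^ m) with hlt | hge
    · exact ⟨h, hh, hlt, rfl, le_refl _⟩
    · have hq1 : 1 ≤ h / 2 ^ m := (Nat.one_le_div_iff (by omega)).mpr hge
      have hdm : 2 ^ m * (h / 2 ^ m) + h % 2 ^ m = h := Nat.div_add_mod h (2 ^ m)
      have hrem : h % 2 ^ m < 2 ^ m := Nat.mod_lt _ (by omega)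
      have hmulq : 2 * (h / 2 ^ m) ≤ 2 ^ m * (h / 2 ^ m) :=
        Nat.mul_le_mul_right _ h2m
      have hglt : h % 2 ^ m + h / 2 ^ m < h := by omega
      have hgpos : 0 < h % 2 ^ m + h / 2 ^ m := by omega
      have e2 : (2 ^ m - 1) * (h / 2 ^ m) + (h / 2 ^ m) = 2 ^ m * (h / 2 ^ m) := by
        rw [Nat.sub_mul]; omega
      have e3 : h = (h % 2 ^ m + h / 2 ^ m) + (2 ^ m - 1) * (h / 2 ^ m) := by omega
      have hmod : (h % 2 ^ m + h / 2 ^ m) % (2 ^ m - 1) = h % (2 ^ m - 1) := by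
        conv_rhs => rw [e3]
        rw [Nat.add_mul_mod_self_left]
      have hsplit : h % 2 ^ m + 2 ^ m * (h / 2 ^ m) = h := by omega
      have e1 : wt2 h = wt2 (h % 2 ^ m) + wt2 (h / 2 ^ m) := by
        have := wt2_append (h % 2 ^ m) (h / 2 ^ m) hrem
        rw [hsplit] at this
        exact this
      have hwt : wt2 (h % 2 ^ m + h / 2 ^ m) ≤ wt2 h := by
        have := wt2_add_le (h % 2 ^ m + h / 2 ^ m) (h % 2 ^ m) (h / 2 ^ m) le_rfl
        omega
      obtain ⟨k, hk1, hk2, hk3, hk4⟩ := ih _ hglt hgpos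
      exact ⟨k, hk1, hk2, by rw [hk3, hmod], le_trans hk4 hwt⟩

lemma wt2_dvd_ge {m h : ℕ} (hm : 1 ≤ m) (hh : 0 < h) (hd : (2 ^ m - 1) ∣ h) : m ≤ wt2 h := by
  obtain ⟨k, hk1, hk2, hk3, hk4⟩ := wt2_fold hm h hh
  have hn : 1 ≤ 2 ^ m - 1 := by
    have : 2 ≤ 2 ^ m := by
      calc 2 = 2 ^ 1 := by norm_num
        _ ≤ 2 ^ m := Nat.pow_le_pow_right (by norm_num) hm
    omega
  have hmod0 : h % (2 ^ m - 1) = 0 := by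
    rcases hd with ⟨c, rfl⟩
    exact Nat.mul_mod_right _ _
  have hkn : (2 ^ m - 1) ∣ k := by
    have : k % (2 ^ m - 1) = 0 := by rw [hk3, hmod0]
    exact Nat.dvd_of_mod_eq_zero this
  have hkeq : k = 2 ^ m - 1 := by
    rcases hkn with ⟨c, hc⟩
    have h2 : 2 ≤ 2 ^ m := by
      calc 2 = 2 ^ 1 := by norm_num
        _ ≤ 2 ^ m := Nat.pow_le_pow_right (by norm_num) hm
    have hc1 : c = 1 := by
      rcases Nat.lt_or_ge c 2 with h' | h'
      · interval_cases c
        · omega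
        · rfl
      · have := Nat.mul_le_mul_left (2 ^ m - 1) h'
        omega
    subst hc1
    simpa using hc
  calc m = wt2 (2 ^ m - 1) := (wt2_pow_sub_one m).symm
    _ = wt2 k := by rw [hkeq]
    _ ≤ wt2 h := hk4

lemma wt2_mod {m h : ℕ} (hm : 1 ≤ m) (h1 : 0 < wt2 h) (h2 : wt2 h ≤ m - 1) :
    0 < h % (2 ^ m - 1) ∧ h % (2 ^ m - 1) < 2 ^ m - 1 ∧ wt2 (h % (2 ^ m - 1)) ≤ wt2 h := by
  have hh : 0 < h := by
    by_contra hc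
    have : h = 0 := by omega
    rw [this, wt2_zero] at h1; omega
  obtain ⟨k, hk1, hk2, hk3, hk4⟩ := wt2_fold hm h hh
  have h2m : 2 ≤ 2 ^ m := by
    calc 2 = 2 ^ 1 := by norm_num
      _ ≤ 2 ^ m := Nat.pow_le_pow_right (by norm_num) hm
  have hkne : k ≠ 2 ^ m - 1 := by
    intro he
    rw [he, wt2_pow_sub_one] at hk4
    omega
  have hklt : k < 2 ^ m - 1 := by omega
  have : k % (2 ^ m - 1) = k := Nat.mod_eq_of_lt hklt
  rw [this] at hk3
  rw [← hk3]
  exact ⟨hk1, hklt, hk4⟩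

lemma wt2_compl {m : ℕ} : ∀ k, k < 2 ^ m → wt2 (2 ^ m - 1 - k) = m - wt2 k := by
  induction m with
  | zero => intro k h; interval_cases k; simp [wt2]
  | succ m ih =>
    intro k h
    have e : 2 ^ (m+1) - 1 - k = 2 * (2 ^ m - 1 - k / 2) + (1 - k % 2) := by
      have h1 : k / 2 ≤ 2 ^ m - 1 := by omega
      have : 2 ^ (m+1) = 2 * 2 ^ m := by ring
      omega
    rw [e, wt2_bit _ _ (by omega), ih (k / 2) (by omega)]
    have h3 : wt2 k = k % 2 + wt2 (k / 2) := wt2_rec k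
    have h4 : wt2 (k / 2) ≤ m := wt2_lt_pow (k / 2) (by omega)
    omega

lemma exists_bits : ∀ h : ℕ, ∃ E : Finset ℕ, (∑ t ∈ E, 2 ^ t) = h ∧ E.card = wt2 h := by
  intro h
  induction h using Nat.strong_induction_on with
  | _ h ih =>
    rcases Nat.eq_zero_or_pos h with h0 | h0
    · exact ⟨∅, by simp [h0], by simp [h0, wt2_zero]⟩
    obtain ⟨E', hE1, hE2⟩ := ih (h / 2) (by omega)
    have hinj : Function.Injective (· + 1 : ℕ → ℕ) := fun a b h => by simpa using h
    set E'' := E'.image (· + 1) with hE''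
    have hcard'' : E''.card = E'.card := Finset.card_image_of_injective _ hinj
    have hsum'' : (∑ t ∈ E'', 2 ^ t) = 2 * (h / 2) := by
      rw [hE'', Finset.sum_image (fun a _ b _ h => by omega)]
      rw [← hE1, Finset.mul_sum]
      exact Finset.sum_congr rfl (fun t _ => by ring)
    have h0not : 0 ∉ E'' := by
      rw [hE'']; simp
    rcases Nat.eq_zero_or_pos (h % 2) with hpar | hpar
    · refine ⟨E'', by rw [hsum'']; omega, ?_⟩
      rw [hcard'', hE2, wt2_rec h]; omega
    · refine ⟨insert 0 E'', ?_, ?_⟩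
      · rw [Finset.sum_insert h0not, hsum'']
        have h20 : (2:ℕ) ^ 0 = 1 := rfl
        omega
      · rw [Finset.card_insert_of_notMem h0not, hcard'', hE2, wt2_rec h]; omega

section CharTwo

variable {K : Type*} [Field K] [CharP K 2]

lemma pow_bits_expand (w y : K) (E : Finset ℕ) :
    (w + y) ^ (∑ t ∈ E, 2 ^ t) =
      ∑ U ∈ E.powerset, w ^ (∑ t ∈ U, 2 ^ t) * y ^ (∑ t ∈ E \ U, 2 ^ t) := by
  rw [← Finset.prod_pow_eq_pow_sum]
  rw [Finset.prod_congr rfl (fun t _ => add_pow_char_pow w y 2 t), Finset.prod_add]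
  exact Finset.sum_congr rfl fun U _ => by
    rw [Finset.prod_pow_eq_pow_sum, Finset.prod_pow_eq_pow_sum]

lemma subspace_sum_zero {ι : Type*} [DecidableEq ι] (g : ι → K) :
    ∀ (D : Finset ι), ∀ (a : K) (E : Finset ℕ), E.card < D.card →
      ∑ S ∈ D.powerset, (a + ∑ i ∈ S, g i) ^ (∑ t ∈ E, 2 ^ t) = 0 := by
  intro D
  induction D using Finset.induction_on with
  | empty => intro a E h; simp at h
  | @insert j D' hj ih =>
    intro a E hE
    rw [Finset.sum_powerset_insert hj]
    have step2 : ∑ S ∈ D'.powerset, (a + ∑ i ∈ insert j S, g i) ^ (∑ t ∈ E, 2 ^ t)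
        = ∑ S ∈ D'.powerset, ((a + ∑ i ∈ S, g i) + g j) ^ (∑ t ∈ E, 2 ^ t) := by
      refine Finset.sum_congr rfl fun S hS => ?_
      have hjS : j ∉ S := fun hjS => hj (Finset.mem_powerset.mp hS hjS)
      rw [Finset.sum_insert hjS]
      ring_nf
    rw [step2]
    have step3 : ∀ S ∈ D'.powerset,
        ((a + ∑ i ∈ S, g i) + g j) ^ (∑ t ∈ E, 2 ^ t)
        = ∑ U ∈ E.powerset, (a + ∑ i ∈ S, g i) ^ (∑ t ∈ U, 2 ^ t) * (g j) ^ (∑ t ∈ E \ U, 2 ^ t) :=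
      fun S _ => pow_bits_expand _ _ E
    rw [Finset.sum_congr rfl step3, Finset.sum_comm]
    have hcard : E.card ≤ D'.card := by
      rw [Finset.card_insert_of_notMem hj] at hE; omega
    have step4 : ∀ U ∈ E.powerset, U ≠ E →
        ∑ S ∈ D'.powerset, (a + ∑ i ∈ S, g i) ^ (∑ t ∈ U, 2 ^ t) * (g j) ^ (∑ t ∈ E \ U, 2 ^ t) = 0 := by
      intro U hU hUne
      have hUcard : U.card < D'.card := by
        have := Finset.card_lt_card (Finset.ssubset_iff_subset_ne.mpr ⟨Finset.mem_powerset.mp hU, hUne⟩)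
        omega
      rw [← Finset.sum_mul, ih a U hUcard, zero_mul]
    rw [Finset.sum_eq_single_of_mem E (Finset.mem_powerset_self E) step4]
    rw [Finset.sdiff_self]
    simp only [Finset.sum_empty, pow_zero, mul_one]
    exact CharTwo.add_self_eq_zero _

lemma geom_sum_char2_one {n : ℕ} (hodd : (n : K) = 1) :
    ∑ i ∈ Finset.range n, (1 : K) ^ i = 1 := by simpa using hodd

lemma geom_sum_char2_ne {n : ℕ} (γ : K) (hγ : γ ^ n = 1) (h : γ ≠ 1) :
    ∑ i ∈ Finset.range n, γ ^ i = 0 := by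
  have := geom_sum_mul γ n
  rw [hγ, sub_self] at this
  rcases mul_eq_zero.mp this with h1 | h2
  · exact h1
  · exact absurd (by rwa [sub_eq_zero] at h2) h

end CharTwo

section Forward

variable {K : Type*} [Field K] [CharP K 2] {m r n : ℕ}

lemma zmod2_cases (b : ZMod 2) : b = 0 ∨ b = 1 := by revert b; decide

/-- The linear combination of powers of α given by a 0/1-vector. -/
def psiF (ι : ZMod 2 →+* K) (α : K) (v : Fin m → ZMod 2) : K :=
  ∑ i : Fin m, ι (v i) * α ^ (i : ℕ)

lemma psi_indicator (ι : ZMod 2 →+* K) (α : K) (U : Finset (Fin m)) :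
    psiF ι α (fun i => if i ∈ U then 1 else 0) = ∑ i ∈ U, α ^ (i : ℕ) := by
  unfold psiF
  have h1 : ∀ i ∈ Finset.univ, ι (if i ∈ U then (1 : ZMod 2) else 0) * α ^ (i : ℕ)
      = if i ∈ U then α ^ (i : ℕ) else 0 := by
    intro i _
    split_ifs with h <;> simp
  rw [Finset.sum_congr rfl h1, Finset.sum_ite_mem, Finset.univ_inter]

lemma psi_filter (ι : ZMod 2 →+* K) (α : K) (v : Fin m → ZMod 2) :
    psiF ι α v = ∑ i ∈ Finset.univ.filter (fun i => v i = 1), α ^ (i : ℕ) := by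
  rw [← psi_indicator ι α]
  congr 1
  funext i
  by_cases h1 : v i = 1
  · simp [Finset.mem_filter, h1]
  · have h0 : v i = 0 := (zmod2_cases _).resolve_right h1
    simp [Finset.mem_filter, h1, h0]

lemma check_sum_monomial_zero (ι : ZMod 2 →+* K)
    (hm : 1 ≤ m) (hr : r < m) (hn : n = 2 ^ m - 1)
    (α : K) (hα : orderOf α = n)
    (coords : K → Fin m → ZMod 2)
    (hcoords : ∀ x : K, psiF ι α (coords x) = x)
    (T : Finset (Fin m)) (hT : T.card ≤ r)
    (h : ℕ) (h1 : 1 ≤ wt2 h) (h2 : wt2 h ≤ m - r - 1) :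
    ∑ i ∈ Finset.range n, (∏ t ∈ T, ι (coords (α ^ i) t)) * (α ^ i) ^ h = 0 := by
  classical
  have h2m : 2 ≤ 2 ^ m := by
    calc 2 = 2 ^ 1 := by norm_num
      _ ≤ 2 ^ m := Nat.pow_le_pow_right (by norm_num) hm
  have hn1 : 1 ≤ n := by omega
  have hordpos : α ^ n = 1 := by rw [← hα]; exact pow_orderOf_eq_one α
  have hα0 : α ≠ 0 := by
    intro h0
    rw [h0, zero_pow (by omega : n ≠ 0)] at hordpos
    exact one_ne_zero hordpos.symm
  have hndvd : ¬ (n ∣ h) := by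
    intro hd
    have hh0 : 0 < h := by
      rcases Nat.eq_zero_or_pos h with h0 | h0
      · rw [h0, wt2_zero] at h1; omega
      · exact h0
    have := wt2_dvd_ge hm hh0 (hn ▸ hd)
    omega
  rcases Finset.eq_empty_or_nonempty T with hTe | hTne
  · subst hTe
    simp only [Finset.prod_empty, one_mul]
    have hrw : ∀ i ∈ Finset.range n, (α ^ i) ^ h = (α ^ h) ^ i := fun i _ => by
      rw [← pow_mul, mul_comm, pow_mul]
    rw [Finset.sum_congr rfl hrw]
    apply geom_sum_char2_ne
    · rw [← pow_mul, mul_comm, pow_mul, hordpos, one_pow]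
    · intro he
      exact hndvd (hα ▸ orderOf_dvd_of_pow_eq_one he)
  · have hψc : ∀ x, psiF ι α (coords x) = x := hcoords
    have hcoords_inj : Function.Injective coords := by
      intro x y hxy
      rw [← hψc x, ← hψc y, hxy]
    have upow : ∀ i j, i < n → j < n → α ^ i = α ^ j → i = j := by
      intro i j hi hj hij
      have huo : orderOf (Units.mk0 α hα0) = n := by
        rw [← hα, ← orderOf_units]
        rfl
      exact pow_injOn_Iio_orderOf (x := Units.mk0 α hα0)
        (by rw [huo]; exact hi) (by rw [huo]; exact hj)
        (by ext; simpa using hij)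
    have hκinj : ∀ x ∈ Finset.range n, ∀ y ∈ Finset.range n,
        coords (α ^ x) = coords (α ^ y) → x = y := by
      intro x hx y hy hxy
      exact upow x y (Finset.mem_range.mp hx) (Finset.mem_range.mp hy) (hcoords_inj hxy)
    have hψ0 : psiF ι α (0 : Fin m → ZMod 2) = 0 := by simp [psiF]
    have hκne : ∀ i ∈ Finset.range n, coords (α ^ i) ≠ 0 := by
      intro i _ h0
      have : (α : K) ^ i = 0 := by rw [← hψc (α ^ i), h0, hψ0]
      exact pow_ne_zero i hα0 this
    have himg : (Finset.range n).image (fun i => coords (α ^ i)) = Finset.univ.erase (0 : Fin m → ZMod 2) := by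
      apply Finset.eq_of_subset_of_card_le
      · intro v hv
        rw [Finset.mem_image] at hv
        obtain ⟨i, hi, rfl⟩ := hv
        exact Finset.mem_erase.mpr ⟨hκne i hi, Finset.mem_univ _⟩
      · rw [Finset.card_erase_of_mem (Finset.mem_univ _),
          Finset.card_image_of_injOn (fun x hx y hy => hκinj x hx y hy)]
        have : Fintype.card (Fin m → ZMod 2) = 2 ^ m := by
          rw [Fintype.card_fun]; simp
        rw [Finset.card_univ, this, Finset.card_range]
        omega
    have hsum1 : ∑ i ∈ Finset.range n, (∏ t ∈ T, ι (coords (α ^ i) t)) * (α ^ i) ^ h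
        = ∑ v ∈ Finset.univ.erase (0 : Fin m → ZMod 2), (∏ t ∈ T, ι (v t)) * (psiF ι α v) ^ h := by
      rw [← himg, Finset.sum_image hκinj]
      exact Finset.sum_congr rfl fun i _ => by rw [hψc]
    rw [hsum1]
    have hsum2 : ∑ v ∈ Finset.univ.erase (0 : Fin m → ZMod 2), (∏ t ∈ T, ι (v t)) * (psiF ι α v) ^ h
        = ∑ v ∈ (Finset.univ.erase (0 : Fin m → ZMod 2)).filter (fun v => ∀ t ∈ T, v t = 1),
            (psiF ι α v) ^ h := by
      rw [Finset.sum_filter]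
      refine Finset.sum_congr rfl fun v _ => ?_
      by_cases hv : ∀ t ∈ T, v t = 1
      · rw [if_pos hv]
        have : ∏ t ∈ T, ι (v t) = 1 := by
          rw [Finset.prod_congr rfl (fun t ht => by rw [hv t ht, map_one])]
          exact Finset.prod_const_one
        rw [this, one_mul]
      · rw [if_neg hv]
        push_neg at hv
        obtain ⟨t, ht, hvt⟩ := hv
        have hvt0 : v t = 0 := (zmod2_cases (v t)).resolve_right hvt
        rw [Finset.prod_eq_zero ht (by rw [hvt0, map_zero]), zero_mul]
    rw [hsum2]
    have hfilter : ((Finset.univ.erase (0 : Fin m → ZMod 2)).filter (fun v => ∀ t ∈ T, v t = 1))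
        = Finset.univ.filter (fun v => ∀ t ∈ T, v t = 1) := by
      ext v
      simp only [Finset.mem_filter, Finset.mem_erase, Finset.mem_univ, true_and]
      constructor
      · rintro ⟨_, hp⟩; exact hp
      · intro hp
        refine ⟨⟨?_, trivial⟩, hp⟩
        intro h0
        obtain ⟨t, ht⟩ := hTne
        have := hp t ht
        rw [h0] at this
        simp at this
    rw [hfilter]
    obtain ⟨E, hE1, hE2⟩ := exists_bits h
    have hTc : Tᶜ.card = m - T.card := by
      rw [Finset.card_compl]; simp
    have hcard : E.card < Tᶜ.card := by rw [hE2, hTc]; omega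
    have hbij : ∑ v ∈ Finset.univ.filter (fun v => ∀ t ∈ T, v t = 1), (psiF ι α v) ^ h
        = ∑ S ∈ Tᶜ.powerset, ((∑ i ∈ T, α ^ (i:ℕ)) + ∑ i ∈ S, α ^ (i:ℕ)) ^ h := by
      refine Finset.sum_nbij' (fun v => (Finset.univ.filter (fun i => v i = 1)) \ T)
        (fun S => fun i => if i ∈ T ∪ S then (1 : ZMod 2) else 0) ?_ ?_ ?_ ?_ ?_
      · intro v hv
        rw [Finset.mem_powerset]
        intro x hx
        rw [Finset.mem_sdiff] at hx
        exact Finset.mem_compl.mpr hx.2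
      · intro S hS
        rw [Finset.mem_filter]
        exact ⟨Finset.mem_univ _, fun t ht => if_pos (Finset.mem_union_left _ ht)⟩
      · intro v hv
        rw [Finset.mem_filter] at hv
        funext x
        by_cases hx : x ∈ T ∪ ((Finset.univ.filter (fun i => v i = 1)) \ T)
        · simp only [if_pos hx]
          rcases Finset.mem_union.mp hx with hxT | hxS
          · exact (hv.2 x hxT).symm
          · rw [Finset.mem_sdiff, Finset.mem_filter] at hxS
            exact hxS.1.2.symm
        · simp only [if_neg hx]
          rcases zmod2_cases (v x) with h0 | h1
          · exact h0.symm
          · exfalso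
            apply hx
            by_cases hxT : x ∈ T
            · exact Finset.mem_union_left _ hxT
            · exact Finset.mem_union_right _ (by
                rw [Finset.mem_sdiff, Finset.mem_filter]
                exact ⟨⟨Finset.mem_univ _, h1⟩, hxT⟩)
      · intro S hS
        rw [Finset.mem_powerset] at hS
        ext x
        rw [Finset.mem_sdiff, Finset.mem_filter]
        constructor
        · rintro ⟨⟨-, hx1⟩, hxT⟩
          by_cases hxS : x ∈ S
          · exact hxS
          · exfalso
            simp only [if_neg (show ¬ (x ∈ T ∪ S) by
              rw [Finset.mem_union]
              rintro (hh | hh)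
              exacts [hxT hh, hxS hh])] at hx1
            simp at hx1
        · intro hxS
          have hxT : x ∉ T := Finset.mem_compl.mp (hS hxS)
          exact ⟨⟨Finset.mem_univ _, if_pos (Finset.mem_union_right _ hxS)⟩, hxT⟩
      · intro v hv
        rw [Finset.mem_filter] at hv
        have hsub : T ⊆ Finset.univ.filter (fun i => v i = 1) :=
          fun t ht => Finset.mem_filter.mpr ⟨Finset.mem_univ _, hv.2 t ht⟩
        have hdisj : Disjoint T ((Finset.univ.filter (fun i => v i = 1)) \ T) :=
          Finset.disjoint_sdiff
        rw [psi_filter ι α v, ← Finset.sum_union hdisj,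
          Finset.union_sdiff_of_subset hsub]
    rw [hbij, ← hE1]
    exact subspace_sum_zero (fun i : Fin m => α ^ (i : ℕ)) Tᶜ _ E hcard

end Forward

section ForwardWrap

variable {K : Type*} [Field K] [CharP K 2] {m r n : ℕ}

lemma eval_push (ι : ZMod 2 →+* K) (f : MvPolynomial (Fin m) (ZMod 2))
    (hml : ∀ s ∈ f.support, ∀ i, s i ≤ 1) (v : Fin m → ZMod 2) :
    ι (MvPolynomial.eval v f)
      = ∑ d ∈ f.support, ι (f.coeff d) * ∏ t ∈ d.support, ι (v t) := by
  rw [MvPolynomial.eval_eq, map_sum]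
  refine Finset.sum_congr rfl fun d hd => ?_
  rw [map_mul, map_prod]
  refine congrArg _ (Finset.prod_congr rfl fun t ht => ?_)
  have h1 : d t = 1 := le_antisymm (hml d hd t)
    (Nat.one_le_iff_ne_zero.mpr (Finsupp.mem_support_iff.mp ht))
  rw [h1, pow_one]

lemma forward_check (ι : ZMod 2 →+* K)
    (hm : 1 ≤ m) (hr : r < m) (hn : n = 2 ^ m - 1)
    (α : K) (hα : orderOf α = n)
    (coords : K → Fin m → ZMod 2)
    (hcoords : ∀ x : K, psiF ι α (coords x) = x)
    (f : MvPolynomial (Fin m) (ZMod 2))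
    (hml : ∀ s ∈ f.support, ∀ i, s i ≤ 1) (hdeg : f.totalDegree ≤ r)
    (h : ℕ) (h1 : 1 ≤ wt2 h) (h2 : wt2 h ≤ m - r - 1) :
    ∑ i ∈ Finset.range n, ι (MvPolynomial.eval (coords (α ^ i)) f) * α ^ (h * i) = 0 := by
  have hrw : ∀ i ∈ Finset.range n,
      ι (MvPolynomial.eval (coords (α ^ i)) f) * α ^ (h * i)
        = ∑ d ∈ f.support, ι (f.coeff d) *
            ((∏ t ∈ d.support, ι (coords (α ^ i) t)) * (α ^ i) ^ h) := by
    intro i _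
    have hp : α ^ (h * i) = (α ^ i) ^ h := by rw [← pow_mul, mul_comm]
    rw [eval_push ι f hml, hp, Finset.sum_mul]
    exact Finset.sum_congr rfl fun d _ => by ring
  rw [Finset.sum_congr rfl hrw, Finset.sum_comm]
  refine Finset.sum_eq_zero fun d hd => ?_
  have hTcard : d.support.card ≤ r := by
    have hc : d.support.card = ∑ t ∈ d.support, 1 := by
      rw [Finset.card_eq_sum_ones]
    have hle : ∑ t ∈ d.support, 1 ≤ ∑ t ∈ d.support, d t :=
      Finset.sum_le_sum fun t ht =>
        Nat.one_le_iff_ne_zero.mpr (Finsupp.mem_support_iff.mp ht)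
    have := MvPolynomial.le_totalDegree hd
    calc d.support.card = ∑ t ∈ d.support, 1 := hc
      _ ≤ ∑ t ∈ d.support, d t := hle
      _ = d.sum fun _ e => e := rfl
      _ ≤ f.totalDegree := this
      _ ≤ r := hdeg
  rw [← Finset.mul_sum,
    check_sum_monomial_zero ι hm hr hn α hα coords hcoords d.support hTcard h h1 h2,
    mul_zero]

end ForwardWrap

section Interp

variable {K : Type*} [Field K] [CharP K 2] {m : ℕ}

/-- Indicator exponent vector of a set of variables. -/
noncomputable def indF (S : Finset (Fin m)) : Fin m →₀ ℕ := ∑ i ∈ S, Finsupp.single i 1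

lemma indF_apply (S : Finset (Fin m)) (j : Fin m) :
    indF S j = if j ∈ S then 1 else 0 := by
  unfold indF
  rw [Finsupp.finset_sum_apply]
  rw [Finset.sum_congr rfl (fun i _ => Finsupp.single_apply)]
  exact Finset.sum_ite_eq' S j (fun _ => 1)

lemma indF_support (S : Finset (Fin m)) : (indF S).support = S := by
  ext j
  rw [Finsupp.mem_support_iff, indF_apply]
  split_ifs with h <;> simp [h]

lemma indF_le_one (S : Finset (Fin m)) (i : Fin m) : indF S i ≤ 1 := by
  rw [indF_apply]; split_ifs <;> omega

lemma indF_degree (S : Finset (Fin m)) : ((indF S).sum fun _ e => e) = S.card := by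
  unfold Finsupp.sum
  rw [indF_support]
  rw [Finset.sum_congr rfl (fun i hi => by rw [indF_apply, if_pos hi])]
  exact (Finset.card_eq_sum_ones S).symm

lemma ml_eq_indF (d : Fin m →₀ ℕ) (hd : ∀ i, d i ≤ 1) : d = indF d.support := by
  ext j
  rw [indF_apply]
  split_ifs with h
  · have h1 := Finsupp.mem_support_iff.mp h
    have h2 := hd j
    omega
  · exact Finsupp.notMem_support_iff.mp h

/-- Indicator point of a subset. -/
def chi (S : Finset (Fin m)) : Fin m → K := fun i => if i ∈ S then 1 else 0

lemma idem_pow {x : K} (hx : x ^ 2 = x) : ∀ k, 1 ≤ k → x ^ k = x := by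
  intro k
  induction k with
  | zero => omega
  | succ k ih =>
    intro _
    rcases Nat.eq_zero_or_pos k with h0 | h0
    · rw [h0, pow_one]
    · rw [pow_succ, ih h0, ← pow_two]; exact hx

lemma eval_chi (g : MvPolynomial (Fin m) K)
    (hml : ∀ d ∈ g.support, ∀ i, d i ≤ 1) (S : Finset (Fin m)) :
    MvPolynomial.eval (chi S : Fin m → K) g
      = ∑ d ∈ g.support, if d.support ⊆ S then g.coeff d else 0 := by
  rw [MvPolynomial.eval_eq]
  refine Finset.sum_congr rfl fun d hd => ?_
  by_cases hsub : d.support ⊆ S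
  · rw [if_pos hsub]
    have : ∀ i ∈ d.support, (chi S : Fin m → K) i ^ d i = 1 := by
      intro i hi
      unfold chi
      rw [if_pos (hsub hi), one_pow]
    rw [Finset.prod_congr rfl this, Finset.prod_const_one, mul_one]
  · obtain ⟨i, hi, hiS⟩ := Finset.not_subset.mp hsub
    rw [if_neg hsub]
    have : (chi S : Fin m → K) i ^ d i = 0 := by
      unfold chi
      rw [if_neg hiS]
      exact zero_pow (Finsupp.mem_support_iff.mp hi)
    rw [Finset.prod_eq_zero hi this, mul_zero]

lemma card_interval (T A : Finset (Fin m)) (hA : A ⊆ T) :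
    (T.powerset.filter (fun S => A ⊆ S)).card = 2 ^ (T.card - A.card) := by
  classical
  rw [← Finset.card_sdiff_of_subset hA, ← Finset.card_powerset]
  apply Finset.card_bij' (fun S _ => S \ A) (fun B _ => A ∪ B)
  · intro S hS
    rw [Finset.mem_filter, Finset.mem_powerset] at hS
    rw [Finset.mem_powerset]
    exact Finset.sdiff_subset_sdiff hS.1 (le_refl _)
  · intro B hB
    rw [Finset.mem_powerset] at hB
    rw [Finset.mem_filter, Finset.mem_powerset]
    constructor
    · apply Finset.union_subset hA
      exact hB.trans (Finset.sdiff_subset)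
    · exact Finset.subset_union_left
  · intro S hS
    rw [Finset.mem_filter] at hS
    exact Finset.union_sdiff_of_subset hS.2
  · intro B hB
    rw [Finset.mem_powerset] at hB
    have hdisj : Disjoint A B := by
      refine Finset.disjoint_left.mpr fun x hxA hxB => ?_
      have := hB hxB
      rw [Finset.mem_sdiff] at this
      exact this.2 hxA
    rw [Finset.union_sdiff_cancel_left hdisj]

lemma sum_eval_chi (g : MvPolynomial (Fin m) K)
    (hml : ∀ d ∈ g.support, ∀ i, d i ≤ 1) (T : Finset (Fin m)) :
    ∑ S ∈ T.powerset, MvPolynomial.eval (chi S : Fin m → K) g = g.coeff (indF T) := by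
  classical
  rw [Finset.sum_congr rfl (fun S _ => eval_chi g hml S), Finset.sum_comm]
  have key : ∀ d ∈ g.support,
      (∑ S ∈ T.powerset, if d.support ⊆ S then g.coeff d else 0)
        = if d = indF T then g.coeff d else 0 := by
    intro d hd
    rw [← Finset.sum_filter]
    rw [Finset.sum_const]
    by_cases hsub : d.support ⊆ T
    · rw [card_interval T d.support hsub]
      by_cases heq : d.support = T
      · have hd0 : T.card - d.support.card = 0 := by rw [heq]; omega
        have hdeq : d = indF T := by rw [← heq]; exact ml_eq_indF d (hml d hd)
        rw [hd0, if_pos hdeq]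
        simp
      · have hlt : d.support.card < T.card := by
          have hle := Finset.card_le_card hsub
          have hne : d.support.card ≠ T.card := fun hc =>
            heq (Finset.eq_of_subset_of_card_le hsub (le_of_eq hc.symm))
          omega
        have hdne : d ≠ indF T := by
          intro hc
          apply heq
          rw [hc, indF_support]
        rw [if_neg hdne]
        rw [nsmul_eq_mul]
        have h2 : ((2 : ℕ) ^ (T.card - d.support.card) : ℕ) = 2 ^ (T.card - d.support.card) := rfl
        have hc0 : (((2 : ℕ) ^ (T.card - d.support.card) : ℕ) : K) = 0 := by
          rw [Nat.cast_pow]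
          rw [show ((2:ℕ) : K) = 0 from by
            exact_mod_cast CharP.cast_eq_zero K 2]
          exact zero_pow (by omega)
        rw [hc0, zero_mul]
    · have hempty : (T.powerset.filter (fun S => d.support ⊆ S)) = ∅ := by
        rw [Finset.filter_eq_empty_iff]
        intro S hS
        rw [Finset.mem_powerset] at hS
        exact fun hc => hsub (hc.trans hS)
      have hdne : d ≠ indF T := by
        intro hc
        apply hsub
        rw [hc, indF_support]
      rw [hempty, if_neg hdne, Finset.card_empty, zero_smul]
  rw [Finset.sum_congr rfl key, Finset.sum_ite_eq' g.support (indF T) (fun d => g.coeff d)]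
  split_ifs with h
  · rfl
  · exact (MvPolynomial.notMem_support_iff.mp h).symm

lemma ml_eq_zero (g : MvPolynomial (Fin m) K)
    (hml : ∀ d ∈ g.support, ∀ i, d i ≤ 1)
    (hvan : ∀ S : Finset (Fin m), MvPolynomial.eval (chi S : Fin m → K) g = 0) :
    g = 0 := by
  ext d
  rw [MvPolynomial.coeff_zero]
  by_cases hd : d ∈ g.support
  · have hdeq : d = indF d.support := ml_eq_indF d (hml d hd)
    rw [hdeq, ← sum_eval_chi g hml d.support]
    exact Finset.sum_eq_zero fun S _ => hvan S
  · exact MvPolynomial.notMem_support_iff.mp hd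

/-- Multilinear reduction of a polynomial. -/
noncomputable def mlred (g : MvPolynomial (Fin m) K) : MvPolynomial (Fin m) K :=
  ∑ d ∈ g.support, MvPolynomial.monomial (indF d.support) (g.coeff d)

lemma mlred_ml (g : MvPolynomial (Fin m) K) :
    ∀ s ∈ (mlred g).support, ∀ i, s i ≤ 1 := by
  intro s hs i
  have hne := MvPolynomial.mem_support_iff.mp hs
  rw [mlred, MvPolynomial.coeff_sum] at hne
  obtain ⟨d, _, hd⟩ := Finset.exists_ne_zero_of_sum_ne_zero hne
  rw [MvPolynomial.coeff_monomial] at hd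
  by_cases he : indF d.support = s
  · rw [← he]; exact indF_le_one _ i
  · rw [if_neg he] at hd; exact absurd rfl hd

lemma mlred_eval (g : MvPolynomial (Fin m) K) (p : Fin m → K) (hp : ∀ i, p i ^ 2 = p i) :
    MvPolynomial.eval p (mlred g) = MvPolynomial.eval p g := by
  rw [mlred, map_sum]
  conv_rhs => rw [MvPolynomial.eval_eq]
  refine Finset.sum_congr rfl fun d hd => ?_
  rw [MvPolynomial.eval_monomial]
  unfold Finsupp.prod
  rw [indF_support]
  congr 1
  refine Finset.prod_congr rfl fun i hi => ?_
  show p i ^ (indF d.support i) = p i ^ d i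
  rw [indF_apply, if_pos hi, pow_one]
  exact (idem_pow (hp i) (d i) (Nat.one_le_iff_ne_zero.mpr (Finsupp.mem_support_iff.mp hi))).symm

lemma mlred_deg (g : MvPolynomial (Fin m) K) :
    (mlred g).totalDegree ≤ g.totalDegree := by
  rw [mlred]
  refine le_trans (MvPolynomial.totalDegree_finset_sum _ _) ?_
  rw [Finset.sup_le_iff]
  intro d hd
  by_cases hc : g.coeff d = 0
  · rw [hc, map_zero]
    simp
  · rw [MvPolynomial.totalDegree_monomial _ hc, indF_degree]
    have hle : ∑ t ∈ d.support, 1 ≤ ∑ t ∈ d.support, d t :=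
      Finset.sum_le_sum fun t ht =>
        Nat.one_le_iff_ne_zero.mpr (Finsupp.mem_support_iff.mp ht)
    calc d.support.card = ∑ t ∈ d.support, 1 := Finset.card_eq_sum_ones _
      _ ≤ ∑ t ∈ d.support, d t := hle
      _ ≤ g.totalDegree := MvPolynomial.le_totalDegree hd

end Interp

section Reverse

variable {K : Type*} [Field K] [CharP K 2] {m r n : ℕ}

lemma totalDegree_map_le' (φ : K →+* K) (g : MvPolynomial (Fin m) K) :
    (g.map φ).totalDegree ≤ g.totalDegree :=
  Finset.sup_mono (MvPolynomial.support_map_subset φ g)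

lemma iota_idem (ι : ZMod 2 →+* K) (b : ZMod 2) : ι b ^ 2 = ι b := by
  rw [← map_pow]
  congr 1
  rcases zmod2_cases b with h | h <;> rw [h] <;> ring

lemma zmod2_idem (b : ZMod 2) : b ^ 2 = b := by
  rcases zmod2_cases b with h | h <;> rw [h] <;> ring

lemma iota_eval_comm (ι : ZMod 2 →+* K) (v : Fin m → ZMod 2)
    (f : MvPolynomial (Fin m) (ZMod 2)) :
    ι (MvPolynomial.eval v f)
      = MvPolynomial.eval (fun i => ι (v i)) (f.map ι) := by
  rw [MvPolynomial.eval_map, ← MvPolynomial.eval₂_id (g := v) f, MvPolynomial.eval₂_comp_left]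
  rfl

lemma support_sum_monomial_subset (A : Finset (Fin m →₀ ℕ)) (c : (Fin m →₀ ℕ) → ZMod 2) :
    (∑ d ∈ A, MvPolynomial.monomial d (c d)).support ⊆ A := by
  intro s hs
  have hne := MvPolynomial.mem_support_iff.mp hs
  rw [MvPolynomial.coeff_sum] at hne
  obtain ⟨d, hd, hcd⟩ := Finset.exists_ne_zero_of_sum_ne_zero hne
  rw [MvPolynomial.coeff_monomial] at hcd
  by_cases he : d = s
  · exact he ▸ hd
  · rw [if_neg he] at hcd; exact absurd rfl hcd

lemma coords_surj (ι : ZMod 2 →+* K)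
    (hm : 1 ≤ m) (hn : n = 2 ^ m - 1)
    (α : K) (hα : orderOf α = n) (hα0 : α ≠ 0)
    (coords : K → Fin m → ZMod 2)
    (hcoords : ∀ x : K, psiF ι α (coords x) = x) :
    ∀ v : Fin m → ZMod 2, v ≠ 0 → ∃ j < n, coords (α ^ j) = v := by
  classical
  have h2m : 2 ≤ 2 ^ m := by
    calc 2 = 2 ^ 1 := by norm_num
      _ ≤ 2 ^ m := Nat.pow_le_pow_right (by norm_num) hm
  have hn1 : 1 ≤ n := by omega
  have hcoords_inj : Function.Injective coords := by
    intro x y hxy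
    rw [← hcoords x, ← hcoords y, hxy]
  have upow : ∀ i j, i < n → j < n → α ^ i = α ^ j → i = j := by
    intro i j hi hj hij
    have huo : orderOf (Units.mk0 α hα0) = n := by
      rw [← hα, ← orderOf_units]; rfl
    exact pow_injOn_Iio_orderOf (x := Units.mk0 α hα0)
      (by rw [huo]; exact hi) (by rw [huo]; exact hj) (by ext; simpa using hij)
  have hκinj : ∀ x ∈ Finset.range n, ∀ y ∈ Finset.range n,
      coords (α ^ x) = coords (α ^ y) → x = y := fun x hx y hy hxy =>
    upow x y (Finset.mem_range.mp hx) (Finset.mem_range.mp hy) (hcoords_inj hxy)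
  have hψ0 : psiF ι α (0 : Fin m → ZMod 2) = 0 := by simp [psiF]
  have hκne : ∀ i ∈ Finset.range n, coords (α ^ i) ≠ 0 := by
    intro i _ h0
    have : (α : K) ^ i = 0 := by rw [← hcoords (α ^ i), h0, hψ0]
    exact pow_ne_zero i hα0 this
  have himg : (Finset.range n).image (fun i => coords (α ^ i))
      = Finset.univ.erase (0 : Fin m → ZMod 2) := by
    apply Finset.eq_of_subset_of_card_le
    · intro v hv
      rw [Finset.mem_image] at hv
      obtain ⟨i, hi, rfl⟩ := hv
      exact Finset.mem_erase.mpr ⟨hκne i hi, Finset.mem_univ _⟩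
    · rw [Finset.card_erase_of_mem (Finset.mem_univ _),
        Finset.card_image_of_injOn (fun x hx y hy => hκinj x hx y hy)]
      have : Fintype.card (Fin m → ZMod 2) = 2 ^ m := by
        rw [Fintype.card_fun]; simp
      rw [Finset.card_univ, this, Finset.card_range]
      omega
  intro v hv
  have : v ∈ (Finset.range n).image (fun i => coords (α ^ i)) := by
    rw [himg]
    exact Finset.mem_erase.mpr ⟨hv, Finset.mem_univ _⟩
  rw [Finset.mem_image] at this
  obtain ⟨j, hj, hje⟩ := this
  exact ⟨j, Finset.mem_range.mp hj, hje⟩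

lemma reverse_construct (ι : ZMod 2 →+* K)
    (hm : 1 ≤ m) (hr : r < m) (hn : n = 2 ^ m - 1)
    (α : K) (hα : orderOf α = n)
    (coords : K → Fin m → ZMod 2)
    (hcoords : ∀ x : K, psiF ι α (coords x) = x)
    (c : ℕ → ZMod 2)
    (hchecks : ∀ h : ℕ, 1 ≤ wt2 h → wt2 h ≤ m - r - 1 →
      ∑ i ∈ Finset.range n, ι (c i) * α ^ (h * i) = 0) :
    ∃ f : MvPolynomial (Fin m) (ZMod 2),
      (∀ s ∈ f.support, ∀ i, s i ≤ 1) ∧ f.totalDegree ≤ r ∧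
      ∀ i < n, c i = MvPolynomial.eval (coords (α ^ i)) f := by
  classical
  have hι : Function.Injective ι := ι.injective
  have h2m : 2 ≤ 2 ^ m := by
    calc 2 = 2 ^ 1 := by norm_num
      _ ≤ 2 ^ m := Nat.pow_le_pow_right (by norm_num) hm
  have hn1 : 1 ≤ n := by omega
  have hordpos : α ^ n = 1 := by rw [← hα]; exact pow_orderOf_eq_one α
  have hα0 : α ≠ 0 := by
    intro h0
    rw [h0, zero_pow (by omega : n ≠ 0)] at hordpos
    exact one_ne_zero hordpos.symm
  have upow : ∀ i j, i < n → j < n → α ^ i = α ^ j → i = j := by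
    intro i j hi hj hij
    have huo : orderOf (Units.mk0 α hα0) = n := by
      rw [← hα, ← orderOf_units]; rfl
    exact pow_injOn_Iio_orderOf (x := Units.mk0 α hα0)
      (by rw [huo]; exact hi) (by rw [huo]; exact hj) (by ext; simpa using hij)
  -- the "inverse" element
  obtain ⟨β, hβ⟩ : ∃ β : K, β = α ^ (n - 1) := ⟨_, rfl⟩
  have hβα : β * α = 1 := by
    rw [hβ, ← pow_succ]
    have : n - 1 + 1 = n := by omega
    rw [this, hordpos]
  have hβn : β ^ n = 1 := by
    rw [hβ, ← pow_mul, mul_comm, pow_mul, hordpos, one_pow]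
  have ncast : (n : K) = 1 := by
    have h2K : ((2 : ℕ) : K) = 0 := CharP.cast_eq_zero K 2
    have he : ((n : ℕ) : K) + 1 = (((2 ^ m : ℕ) : ℕ) : K) := by
      rw [show (2 ^ m : ℕ) = n + 1 by omega]
      push_cast
      ring
    rw [Nat.cast_pow, h2K, zero_pow (by omega : m ≠ 0)] at he
    have : ((n : ℕ) : K) = -1 := by linear_combination he
    rw [this, CharTwo.neg_eq]
  -- Fourier coefficients
  obtain ⟨A, hA⟩ : ∃ A : ℕ → K,
      A = fun k => ∑ i ∈ Finset.range n, ι (c i) * β ^ (k * i) := ⟨_, rfl⟩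
  have inversion : ∀ j, j < n → ∑ k ∈ Finset.range n, A k * α ^ (k * j) = ι (c j) := by
    intro j hj
    simp only [hA]
    have step : ∀ k ∈ Finset.range n,
        (∑ i ∈ Finset.range n, ι (c i) * β ^ (k * i)) * α ^ (k * j)
          = ∑ i ∈ Finset.range n, ι (c i) * (β ^ i * α ^ j) ^ k := by
      intro k _
      rw [Finset.sum_mul]
      refine Finset.sum_congr rfl fun i _ => ?_
      rw [mul_assoc, mul_pow, ← pow_mul, ← pow_mul, mul_comm i k, mul_comm j k]
    rw [Finset.sum_congr rfl step, Finset.sum_comm]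
    have inner : ∀ i ∈ Finset.range n, i ≠ j →
        ∑ k ∈ Finset.range n, ι (c i) * (β ^ i * α ^ j) ^ k = 0 := by
      intro i hi hij
      rw [← Finset.mul_sum]
      have hγn : (β ^ i * α ^ j) ^ n = 1 := by
        rw [mul_pow, ← pow_mul, ← pow_mul, mul_comm i n, mul_comm j n, pow_mul, pow_mul,
          hβn, hordpos, one_pow, one_pow, one_mul]
      have hγ1 : β ^ i * α ^ j ≠ 1 := by
        intro he
        apply hij
        apply upow i j (Finset.mem_range.mp hi) hj
        have : α ^ j * (β ^ i * α ^ i) = α ^ i * (β ^ i * α ^ j) := by ring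
        rw [he, mul_one] at this
        have hβαi : β ^ i * α ^ i = 1 := by rw [← mul_pow, hβα, one_pow]
        rw [hβαi, mul_one] at this
        exact this.symm
      rw [geom_sum_char2_ne _ hγn hγ1, mul_zero]
    rw [Finset.sum_eq_single_of_mem j (Finset.mem_range.mpr hj) inner]
    have hγj : β ^ j * α ^ j = 1 := by rw [← mul_pow, hβα, one_pow]
    rw [hγj]
    simp only [one_pow]
    rw [Finset.sum_const, Finset.card_range, nsmul_eq_mul, ncast, one_mul, mul_one]
  -- vanishing of Fourier coefficients of high weight
  have vanish : ∀ k, 0 < k → k < n → r < wt2 k → A k = 0 := by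
    intro k hk0 hkn hwk
    have hβk : β ^ k = α ^ (n - k) := by
      have h1 : β ^ k * α ^ k = 1 := by rw [← mul_pow, hβα, one_pow]
      have h2 : α ^ (n - k) * α ^ k = 1 := by
        rw [← pow_add, Nat.sub_add_cancel (le_of_lt hkn), hordpos]
      calc β ^ k = β ^ k * (α ^ (n - k) * α ^ k) := by rw [h2, mul_one]
        _ = α ^ (n - k) * (β ^ k * α ^ k) := by ring
        _ = α ^ (n - k) := by rw [h1, mul_one]
    have hform : A k = ∑ i ∈ Finset.range n, ι (c i) * α ^ ((n - k) * i) := by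
      simp only [hA]
      refine Finset.sum_congr rfl fun i _ => ?_
      rw [pow_mul, hβk, ← pow_mul]
    have hklt : k < 2 ^ m := by omega
    have hwc : wt2 (n - k) = m - wt2 k := by
      rw [hn]
      exact wt2_compl k hklt
    have hwk_le : wt2 k ≤ m := wt2_lt_pow k hklt
    have hnk0 : 0 < n - k := by omega
    rw [hform]
    apply hchecks
    · rw [hwc]
      have := wt2_pos (h := n - k) hnk0
      rw [hwc] at this
      omega
    · rw [hwc]; omega
  obtain ⟨Kset, hKset⟩ : ∃ Kset : Finset ℕ,
      Kset = (Finset.range n).filter (fun k => wt2 k ≤ r) := ⟨_, rfl⟩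
  have inversion2 : ∀ j, j < n → ∑ k ∈ Kset, A k * α ^ (k * j) = ι (c j) := by
    intro j hj
    rw [← inversion j hj, hKset]
    apply Finset.sum_filter_of_ne
    intro k hk hne
    by_contra hwk
    have hk0 : 0 < k := by
      rcases Nat.eq_zero_or_pos k with h0 | h0
      · exfalso; apply hwk; rw [h0, wt2_zero]; omega
      · exact h0
    rw [vanish k hk0 (Finset.mem_range.mp hk) (by omega), zero_mul] at hne
    exact hne rfl
  choose Eb hEb1 hEb2 using exists_bits
  have psi_pow : ∀ (v : Fin m → ZMod 2) (t : ℕ),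
      (psiF ι α v) ^ (2 ^ t) = ∑ i : Fin m, ι (v i) * α ^ ((i : ℕ) * 2 ^ t) := by
    intro v t
    unfold psiF
    rw [sum_pow_char_pow]
    refine Finset.sum_congr rfl fun i _ => ?_
    rw [mul_pow, ← map_pow, idem_pow (zmod2_idem (v i)) (2 ^ t) Nat.one_le_two_pow,
      ← pow_mul]
  obtain ⟨G, hG⟩ : ∃ G : MvPolynomial (Fin m) K,
      G = ∑ k ∈ Kset, MvPolynomial.C (A k) *
        ∏ t ∈ Eb k, (∑ i : Fin m, MvPolynomial.C (α ^ ((i : ℕ) * 2 ^ t)) * MvPolynomial.X i)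
      := ⟨_, rfl⟩
  have evalG : ∀ v : Fin m → ZMod 2,
      MvPolynomial.eval (fun i => ι (v i)) G = ∑ k ∈ Kset, A k * (psiF ι α v) ^ k := by
    intro v
    rw [hG, map_sum]
    refine Finset.sum_congr rfl fun k hk => ?_
    rw [map_mul, MvPolynomial.eval_C, map_prod]
    congr 1
    conv_rhs => rw [← hEb1 k, ← Finset.prod_pow_eq_pow_sum]
    refine Finset.prod_congr rfl fun t _ => ?_
    rw [map_sum, psi_pow v t]
    refine Finset.sum_congr rfl fun i _ => ?_
    rw [map_mul, MvPolynomial.eval_C, MvPolynomial.eval_X]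
    ring
  have hGdeg : G.totalDegree ≤ r := by
    rw [hG]
    refine le_trans (MvPolynomial.totalDegree_finset_sum _ _) ?_
    rw [Finset.sup_le_iff]
    intro k hk
    refine le_trans (MvPolynomial.totalDegree_mul _ _) ?_
    rw [MvPolynomial.totalDegree_C, zero_add]
    refine le_trans (MvPolynomial.totalDegree_finset_prod _ _) ?_
    have hlin : ∀ t ∈ Eb k,
        (∑ i : Fin m, MvPolynomial.C (α ^ ((i : ℕ) * 2 ^ t)) * MvPolynomial.X i).totalDegree
          ≤ 1 := by
      intro t _
      refine le_trans (MvPolynomial.totalDegree_finset_sum _ _) ?_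
      rw [Finset.sup_le_iff]
      intro i _
      refine le_trans (MvPolynomial.totalDegree_mul _ _) ?_
      rw [MvPolynomial.totalDegree_C, zero_add]
      exact le_of_eq (MvPolynomial.totalDegree_X i)
    have hwk : wt2 k ≤ r := by
      rw [hKset] at hk
      exact (Finset.mem_filter.mp hk).2
    refine le_trans (Finset.sum_le_sum hlin) ?_
    rw [Finset.sum_const, smul_eq_mul, mul_one, hEb2 k]
    exact hwk
  have hGh_ml := mlred_ml G
  have hGh_deg : (mlred G).totalDegree ≤ r := le_trans (mlred_deg G) hGdeg
  have hGh_eval : ∀ j, j < n →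
      MvPolynomial.eval (fun i => ι (coords (α ^ j) i)) (mlred G) = ι (c j) := by
    intro j hj
    rw [mlred_eval G _ (fun i => iota_idem ι _), evalG, hcoords (α ^ j), ← inversion2 j hj]
    refine Finset.sum_congr rfl fun k _ => ?_
    rw [← pow_mul, mul_comm j k]
  obtain ⟨φ, hφ⟩ : ∃ φ : K →+* K, φ = frobenius K 2 := ⟨_, rfl⟩
  have hφp : ∀ x : K, φ x = x ^ 2 := fun x => by rw [hφ]; exact frobenius_def 2 x
  have evalmap : ∀ (p : Fin m → K), (∀ i, φ (p i) = p i) →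
      MvPolynomial.eval p ((mlred G).map φ) = φ (MvPolynomial.eval p (mlred G)) := by
    intro p hp
    have h1 : φ (MvPolynomial.eval p (mlred G))
        = MvPolynomial.eval₂ (φ.comp (RingHom.id K)) (⇑φ ∘ p) (mlred G) := by
      rw [← MvPolynomial.eval₂_id (g := p) (mlred G)]
      exact MvPolynomial.eval₂_comp_left φ (RingHom.id K) p (mlred G)
    have hpp : ⇑φ ∘ p = p := funext hp
    rw [MvPolynomial.eval_map, h1, RingHom.comp_id, hpp]
  have hD_ml : ∀ s ∈ ((mlred G).map φ + mlred G).support, ∀ i, s i ≤ 1 := by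
    intro s hs i
    rcases Finset.mem_union.mp (MvPolynomial.support_add hs) with h1 | h1
    · exact hGh_ml s (MvPolynomial.support_map_subset φ (mlred G) h1) i
    · exact hGh_ml s h1 i
  have hD_deg : ((mlred G).map φ + mlred G).totalDegree < m := by
    refine lt_of_le_of_lt (le_trans (MvPolynomial.totalDegree_add _ _) ?_) (by omega : r < m)
    exact max_le (le_trans (totalDegree_map_le' φ (mlred G)) hGh_deg) hGh_deg
  have hD_chi0 : ∀ S : Finset (Fin m), S.Nonempty →
      MvPolynomial.eval (chi S : Fin m → K) ((mlred G).map φ + mlred G) = 0 := by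
    intro S hS
    have hchi : (chi S : Fin m → K) = fun i => ι (if i ∈ S then 1 else 0) := by
      funext i; unfold chi; split_ifs <;> simp
    have hvS0 : (fun i => if i ∈ S then (1 : ZMod 2) else 0) ≠ 0 := by
      obtain ⟨t, ht⟩ := hS
      intro h0
      have h1 : (if t ∈ S then (1 : ZMod 2) else 0) = 0 := congrFun h0 t
      rw [if_pos ht] at h1
      exact one_ne_zero h1
    obtain ⟨j, hj, hje⟩ := coords_surj ι hm hn α hα hα0 coords hcoords _ hvS0
    have hveq : (fun i => ι (coords (α ^ j) i))
        = (fun i => ι (if i ∈ S then (1 : ZMod 2) else 0)) := by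
      rw [hje]
    have heval : MvPolynomial.eval (fun i => ι (if i ∈ S then (1 : ZMod 2) else 0)) (mlred G)
        = ι (c j) := by
      rw [← hveq]
      exact hGh_eval j hj
    have hidem : ∀ i, φ (ι (if i ∈ S then (1 : ZMod 2) else 0))
        = ι (if i ∈ S then (1 : ZMod 2) else 0) := by
      intro i; rw [hφp, iota_idem]
    rw [map_add, hchi, evalmap _ hidem, heval, hφp, iota_idem]
    exact CharTwo.add_self_eq_zero _
  have hD_chiall : ∀ S : Finset (Fin m),
      MvPolynomial.eval (chi S : Fin m → K) ((mlred G).map φ + mlred G) = 0 := by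
    intro S
    rcases Finset.eq_empty_or_nonempty S with rfl | hS
    · have hsum := sum_eval_chi _ hD_ml Finset.univ
      have hms : ∑ i ∈ (indF (Finset.univ : Finset (Fin m))).support, indF Finset.univ i = m := by
        have h1 := indF_degree (Finset.univ : Finset (Fin m))
        unfold Finsupp.sum at h1
        rw [h1, Finset.card_univ, Fintype.card_fin]
      have hcoef : ((mlred G).map φ + mlred G).coeff (indF Finset.univ) = 0 := by
        apply MvPolynomial.coeff_eq_zero_of_totalDegree_lt
        rw [hms]
        exact hD_deg
      rw [hcoef] at hsum
      have hsingle := Finset.sum_eq_single_of_mem (s := (Finset.univ : Finset (Fin m)).powerset)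
        (∅ : Finset (Fin m))
        (Finset.mem_powerset.mpr (Finset.empty_subset _))
        (fun S _ hSne => hD_chi0 S (Finset.nonempty_iff_ne_empty.mpr hSne))
      exact hsingle.symm.trans hsum
    · exact hD_chi0 S hS
  have hD0 : (mlred G).map φ + mlred G = 0 := ml_eq_zero _ hD_ml hD_chiall
  have hfixG : (mlred G).map φ = mlred G := by
    calc (mlred G).map φ = (mlred G).map φ + (mlred G + mlred G) := by
          rw [CharTwo.add_self_eq_zero, add_zero]
      _ = ((mlred G).map φ + mlred G) + mlred G := by ring
      _ = 0 + mlred G := by rw [hD0]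
      _ = mlred G := zero_add _
  have hcoeff : ∀ d, ∃ b : ZMod 2, ι b = (mlred G).coeff d := by
    intro d
    have h1 : φ ((mlred G).coeff d) = (mlred G).coeff d := by
      have h2 := congrArg (MvPolynomial.coeff d) hfixG
      rw [MvPolynomial.coeff_map] at h2
      exact h2
    rw [hφp] at h1
    have h2 : (mlred G).coeff d * ((mlred G).coeff d - 1) = 0 := by linear_combination h1
    rcases mul_eq_zero.mp h2 with h3 | h3
    · exact ⟨0, by rw [map_zero, h3]⟩
    · exact ⟨1, by rw [map_one]; exact (sub_eq_zero.mp h3).symm⟩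
  choose bcoef hbcoef using hcoeff
  refine ⟨∑ d ∈ (mlred G).support, MvPolynomial.monomial d (bcoef d), ?_, ?_, ?_⟩
  · intro s hs i
    exact hGh_ml s (support_sum_monomial_subset _ _ hs) i
  · refine le_trans (MvPolynomial.totalDegree_finset_sum _ _) ?_
    rw [Finset.sup_le_iff]
    intro d hd
    by_cases hc : bcoef d = 0
    · rw [hc, map_zero]; simp
    · rw [MvPolynomial.totalDegree_monomial _ hc]
      exact le_trans (MvPolynomial.le_totalDegree hd) hGh_deg
  · intro i hi
    apply hι
    have hmapf : MvPolynomial.map ι (∑ d ∈ (mlred G).support, MvPolynomial.monomial d (bcoef d))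
        = mlred G := by
      rw [map_sum]
      rw [Finset.sum_congr rfl (fun d _ => by rw [MvPolynomial.map_monomial, hbcoef])]
      exact MvPolynomial.support_sum_monomial_coeff (mlred G)
    rw [iota_eval_comm, hmapf, hGh_eval i hi]

end Reverse

section Generator

variable {K : Type*} [Field K] [CharP K 2] {m r n : ℕ}

lemma coset_closed (hm : 1 ≤ m) (hr : r < m) (hn : n = 2 ^ m - 1) :
    ∀ i ∈ (Finset.range n).filter (fun h => 1 ≤ wt2 h ∧ wt2 h ≤ m - r - 1),
      ∀ j : ℕ, i * 2 ^ j % n ∈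
        (Finset.range n).filter (fun h => 1 ≤ wt2 h ∧ wt2 h ≤ m - r - 1) := by
  intro i hi j
  rw [Finset.mem_filter, Finset.mem_range] at hi
  obtain ⟨hin, hw1, hw2⟩ := hi
  have hww : wt2 (i * 2 ^ j) = wt2 i := by rw [mul_comm]; exact wt2_pow_mul j i
  have hmod := wt2_mod (m := m) (h := i * 2 ^ j) hm (by omega) (by omega)
  rw [Finset.mem_filter, Finset.mem_range, hn]
  refine ⟨hmod.2.1, wt2_pos hmod.1, ?_⟩
  calc wt2 (i * 2 ^ j % (2 ^ m - 1)) ≤ wt2 (i * 2 ^ j) := hmod.2.2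
    _ = wt2 i := hww
    _ ≤ m - r - 1 := hw2

lemma pow_inj_lt (α : K) (hα : orderOf α = n) (hα0 : α ≠ 0) :
    ∀ i j, i < n → j < n → α ^ i = α ^ j → i = j := by
  intro i j hi hj hij
  have huo : orderOf (Units.mk0 α hα0) = n := by
    rw [← hα, ← orderOf_units]; rfl
  exact pow_injOn_Iio_orderOf (x := Units.mk0 α hα0)
    (by rw [huo]; exact hi) (by rw [huo]; exact hj) (by ext; simpa using hij)

lemma generator_exists (hm : 1 ≤ m) (hr : r < m) (hn : n = 2 ^ m - 1)
    (α : K) (hα : orderOf α = n) (ι : ZMod 2 →+* K) :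
    ∃ g₂ : Polynomial (ZMod 2),
      g₂.map ι = ∏ h ∈ (Finset.range n).filter (fun h => 1 ≤ wt2 h ∧ wt2 h ≤ m - r - 1),
        (Polynomial.X - Polynomial.C (α ^ h)) := by
  classical
  have h2m : 2 ≤ 2 ^ m := by
    calc 2 = 2 ^ 1 := by norm_num
      _ ≤ 2 ^ m := Nat.pow_le_pow_right (by norm_num) hm
  have hn1 : 1 ≤ n := by omega
  have h2me : 2 ^ m = 2 * 2 ^ (m - 1) := by
    conv_lhs => rw [show m = (m - 1) + 1 by omega]
    ring
  have hodd : ¬ (2 ∣ n) := by omega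
  have hcop : Nat.Coprime 2 n := (Nat.prime_two.coprime_iff_not_dvd).mpr hodd
  obtain ⟨D, hD⟩ : ∃ D : Finset ℕ,
      D = (Finset.range n).filter (fun h => 1 ≤ wt2 h ∧ wt2 h ≤ m - r - 1) := ⟨_, rfl⟩
  obtain ⟨P, hP⟩ : ∃ P : Polynomial K,
      P = ∏ h ∈ D, (Polynomial.X - Polynomial.C (α ^ h)) := ⟨_, rfl⟩
  have hmem : ∀ h ∈ D, 2 * h % n ∈ D := by
    intro h hh
    have := coset_closed (r := r) hm hr hn h (hD ▸ hh) 1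
    rw [← hD] at this
    rw [show h * 2 ^ 1 = 2 * h by ring] at this
    exact this
  have hinjD : ∀ h₁ ∈ D, ∀ h₂ ∈ D, 2 * h₁ % n = 2 * h₂ % n → h₁ = h₂ := by
    intro h₁ hh₁ h₂ hh₂ he
    have hlt₁ : h₁ < n := by
      have := (Finset.mem_filter.mp (hD ▸ hh₁)).1; exact Finset.mem_range.mp this
    have hlt₂ : h₂ < n := by
      have := (Finset.mem_filter.mp (hD ▸ hh₂)).1; exact Finset.mem_range.mp this
    have hmeq : Nat.ModEq n (2 * h₁) (2 * h₂) := he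
    have heq : h₁ % n = h₂ % n :=
      Nat.ModEq.cancel_left_of_coprime (show Nat.gcd n 2 = 1 from (Nat.coprime_comm.mp hcop)) hmeq
    rwa [Nat.mod_eq_of_lt hlt₁, Nat.mod_eq_of_lt hlt₂] at heq
  have hordpos : α ^ n = 1 := by rw [← hα]; exact pow_orderOf_eq_one α
  have hα0 : α ≠ 0 := by
    intro h0
    rw [h0, zero_pow (by omega : n ≠ 0)] at hordpos
    exact one_ne_zero hordpos.symm
  -- Frobenius-invariance of P
  have hfix : P.map (frobenius K 2) = P := by
    rw [hP, Polynomial.map_prod]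
    have hterm : ∀ h ∈ D, (Polynomial.X - Polynomial.C (α ^ h)).map (frobenius K 2)
        = Polynomial.X - Polynomial.C (α ^ (2 * h % n)) := by
      intro h _
      rw [Polynomial.map_sub, Polynomial.map_X, Polynomial.map_C]
      congr 2
      rw [frobenius_def, ← pow_mul, mul_comm h 2, ← hα, pow_mod_orderOf]
    rw [Finset.prod_congr rfl hterm]
    apply Finset.prod_bij (fun h _ => 2 * h % n) hmem hinjD
    · intro bb hbb
      obtain ⟨a, ha, he⟩ := Finset.surj_on_of_inj_on_of_card_le (fun h _ => 2 * h % n) hmem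
        (fun a₁ a₂ ha₁ ha₂ => hinjD a₁ ha₁ a₂ ha₂) (le_refl _) bb hbb
      exact ⟨a, ha, he.symm⟩
    · intro h hh
      rfl
  have hcoeff : ∀ k, ∃ b : ZMod 2, ι b = P.coeff k := by
    intro k
    have h1 : frobenius K 2 (P.coeff k) = P.coeff k := by
      have h2 := congrArg (fun q => Polynomial.coeff q k) hfix
      simpa [Polynomial.coeff_map] using h2
    rw [frobenius_def] at h1
    have h2 : P.coeff k * (P.coeff k - 1) = 0 := by linear_combination h1
    rcases mul_eq_zero.mp h2 with h3 | h3
    · exact ⟨0, by rw [map_zero, h3]⟩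
    · exact ⟨1, by rw [map_one]; exact (sub_eq_zero.mp h3).symm⟩
  choose b hb using hcoeff
  refine ⟨∑ k ∈ P.support, Polynomial.monomial k (b k), ?_⟩
  rw [← hD, ← hP, Polynomial.map_sum,
    Finset.sum_congr rfl (fun k _ => by rw [Polynomial.map_monomial, hb]),
    ← Polynomial.sum_def P fun n a => Polynomial.monomial n a]
  exact Polynomial.sum_monomial_eq P

end Generator

section Assemble

variable {K : Type*} [Field K] [CharP K 2] {m r n : ℕ}

/-- Extension of a `Fin n`-indexed word to `ℕ`. -/
def cext {n : ℕ} (c : Fin n → ZMod 2) : ℕ → ZMod 2 :=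
  fun i => if hi : i < n then c ⟨i, hi⟩ else 0

lemma cext_coe {n : ℕ} (c : Fin n → ZMod 2) (i : Fin n) : cext c (i : ℕ) = c i := by
  simp [cext]

lemma eval_cpoly (ι : ZMod 2 →+* K) (α : K) (c : Fin n → ZMod 2) (h : ℕ) :
    Polynomial.eval (α ^ h) ((∑ i : Fin n, Polynomial.monomial (i : ℕ) (c i)).map ι)
      = ∑ i : Fin n, ι (c i) * α ^ (h * (i : ℕ)) := by
  rw [Polynomial.map_sum, Polynomial.eval_finset_sum]
  refine Finset.sum_congr rfl fun i _ => ?_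
  rw [Polynomial.map_monomial, Polynomial.eval_monomial, ← pow_mul]

end Assemble

/-- Let `n = 2^m − 1`, `α` primitive in `F_{2^m}`, `0 ≤ r ≤ m−1`.  The
reordered punctured Reed-Muller code `R(r,m)*` equals the binary BCH code
`{c ∈ F_2^n : ∑_i ι(c_i)·α^{h·i} = 0 for all h with 1 ≤ wt₂(h) ≤ m−r−1}`;
moreover it is the cyclic code with generator polynomial
`∏_{h : 1 ≤ wt₂(h) ≤ m−r−1} (x − α^h)` (a polynomial with coefficients in
`F_2`), and its defining set `{h < n : 1 ≤ wt₂(h) ≤ m−r−1}` is a union of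
cyclotomic cosets.  Hence the punctured Reed-Muller code of order `r` is, after
this reordering of coordinates, a BCH code. -/
theorem punctured_RM_is_BCH (m r n : ℕ) (hm : 1 ≤ m) (hr : r < m)
    (hn : n = 2 ^ m - 1)
    (α : GaloisField 2 m) (hα : orderOf α = n)
    (coords : GaloisField 2 m → Fin m → ZMod 2)
    (hcoords : ∀ x : GaloisField 2 m,
      ∑ i : Fin m, algebraMap (ZMod 2) (GaloisField 2 m) (coords x i) * α ^ (i : ℕ) = x) :
    ({c : Fin n → ZMod 2 | ∃ f : MvPolynomial (Fin m) (ZMod 2),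
        IsMultilinear f ∧ f.totalDegree ≤ r ∧
        ∀ i : Fin n, c i = MvPolynomial.eval (coords (α ^ (i : ℕ))) f}
      = {c : Fin n → ZMod 2 | ∀ h : ℕ, 1 ≤ wt2 h → wt2 h ≤ m - r - 1 →
          ∑ i : Fin n,
            algebraMap (ZMod 2) (GaloisField 2 m) (c i) * α ^ (h * (i : ℕ)) = 0}) ∧
    (∃ g₂ : Polynomial (ZMod 2),
      g₂.map (algebraMap (ZMod 2) (GaloisField 2 m)) =
        ∏ h ∈ (Finset.range n).filter (fun h => 1 ≤ wt2 h ∧ wt2 h ≤ m - r - 1),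
          (Polynomial.X - Polynomial.C (α ^ h)) ∧
      ∀ c : Fin n → ZMod 2,
        ((∃ f : MvPolynomial (Fin m) (ZMod 2), IsMultilinear f ∧
            f.totalDegree ≤ r ∧
            ∀ i : Fin n, c i = MvPolynomial.eval (coords (α ^ (i : ℕ))) f)
          ↔ g₂ ∣ ∑ i : Fin n, Polynomial.monomial (i : ℕ) (c i))) ∧
    (∀ i ∈ (Finset.range n).filter (fun h => 1 ≤ wt2 h ∧ wt2 h ≤ m - r - 1),
      ∀ j : ℕ, i * 2 ^ j % n ∈
        (Finset.range n).filter (fun h => 1 ≤ wt2 h ∧ wt2 h ≤ m - r - 1)) := by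
  classical
  have hψ : ∀ x : GaloisField 2 m,
      psiF (algebraMap (ZMod 2) (GaloisField 2 m)) α (coords x) = x := hcoords
  have h2m : 2 ≤ 2 ^ m := by
    calc 2 = 2 ^ 1 := by norm_num
      _ ≤ 2 ^ m := Nat.pow_le_pow_right (by norm_num) hm
  have hn1 : 1 ≤ n := by omega
  have hordpos : α ^ n = 1 := by rw [← hα]; exact pow_orderOf_eq_one α
  have hα0 : α ≠ 0 := by
    intro h0
    rw [h0, zero_pow (by omega : n ≠ 0)] at hordpos
    exact one_ne_zero hordpos.symm
  have hsum_eq : ∀ (c : Fin n → ZMod 2) (h : ℕ),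
      ∑ i : Fin n, (algebraMap (ZMod 2) (GaloisField 2 m)) (c i) * α ^ (h * (i : ℕ))
        = ∑ i ∈ Finset.range n, (algebraMap (ZMod 2) (GaloisField 2 m)) (cext c i) * α ^ (h * i) := by
    intro c h
    rw [← Fin.sum_univ_eq_sum_range (fun i => (algebraMap (ZMod 2) (GaloisField 2 m)) (cext c i) * α ^ (h * i)) n]
    exact Finset.sum_congr rfl fun i _ => by rw [cext_coe]
  -- Part 1
  have hset : {c : Fin n → ZMod 2 | ∃ f : MvPolynomial (Fin m) (ZMod 2),
        IsMultilinear f ∧ f.totalDegree ≤ r ∧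
        ∀ i : Fin n, c i = MvPolynomial.eval (coords (α ^ (i : ℕ))) f}
      = {c : Fin n → ZMod 2 | ∀ h : ℕ, 1 ≤ wt2 h → wt2 h ≤ m - r - 1 →
          ∑ i : Fin n, (algebraMap (ZMod 2) (GaloisField 2 m)) (c i) * α ^ (h * (i : ℕ)) = 0} := by
    ext c
    simp only [Set.mem_setOf_eq]
    constructor
    · rintro ⟨f, hml, hdeg, heval⟩ h hw1 hw2
      rw [hsum_eq c h]
      have hre : ∀ i ∈ Finset.range n,
          (algebraMap (ZMod 2) (GaloisField 2 m)) (cext c i) * α ^ (h * i)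
            = (algebraMap (ZMod 2) (GaloisField 2 m)) (MvPolynomial.eval (coords (α ^ i)) f) * α ^ (h * i) := by
        intro i hi
        have hi' := Finset.mem_range.mp hi
        have : cext c i = c ⟨i, hi'⟩ := dif_pos hi'
        rw [this, heval ⟨i, hi'⟩]
      rw [Finset.sum_congr rfl hre]
      exact forward_check (algebraMap (ZMod 2) (GaloisField 2 m)) hm hr hn α hα coords hψ f hml hdeg h hw1 hw2
    · intro hBCH
      obtain ⟨f, hml, hdeg, hev⟩ := reverse_construct (algebraMap (ZMod 2) (GaloisField 2 m)) hm hr hn α hα coords hψ (cext c)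
        (fun h hw1 hw2 => by rw [← hsum_eq c h]; exact hBCH h hw1 hw2)
      refine ⟨f, hml, hdeg, fun i => ?_⟩
      have := hev (i : ℕ) i.isLt
      rwa [cext_coe] at this
  refine ⟨hset, ?_, coset_closed hm hr hn⟩
  -- Part 2
  obtain ⟨g₂, hg₂⟩ := generator_exists (r := r) hm hr hn α hα (algebraMap (ZMod 2) (GaloisField 2 m))
  refine ⟨g₂, hg₂, fun c => ?_⟩
  constructor
  · intro hcRM
    have hc2 : ∀ h : ℕ, 1 ≤ wt2 h → wt2 h ≤ m - r - 1 →
        ∑ i : Fin n, (algebraMap (ZMod 2) (GaloisField 2 m)) (c i) * α ^ (h * (i : ℕ)) = 0 := by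
      have hmem : c ∈ {c : Fin n → ZMod 2 | ∀ h : ℕ, 1 ≤ wt2 h → wt2 h ≤ m - r - 1 →
          ∑ i : Fin n, (algebraMap (ZMod 2) (GaloisField 2 m)) (c i) * α ^ (h * (i : ℕ)) = 0} := by
        rw [← hset]; exact hcRM
      exact hmem
    rw [← Polynomial.map_dvd_map' (algebraMap (ZMod 2) (GaloisField 2 m)), hg₂]
    apply Finset.prod_dvd_of_coprime
    · intro x hx y hy hxy
      have hxlt := Finset.mem_range.mp (Finset.mem_filter.mp hx).1
      have hylt := Finset.mem_range.mp (Finset.mem_filter.mp hy).1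
      have hne : α ^ (x : ℕ) ≠ α ^ (y : ℕ) := fun he =>
        hxy (pow_inj_lt α hα hα0 x y hxlt hylt he)
      exact Polynomial.isCoprime_X_sub_C_of_isUnit_sub
        ((sub_ne_zero.mpr hne).isUnit)
    · intro h hh
      obtain ⟨hhr, hw1, hw2⟩ := Finset.mem_filter.mp hh
      rw [Polynomial.dvd_iff_isRoot]
      show Polynomial.eval (α ^ h) _ = 0
      rw [eval_cpoly]
      exact hc2 h hw1 hw2
  · intro hdvd
    have hD : ∀ h ∈ (Finset.range n).filter (fun h => 1 ≤ wt2 h ∧ wt2 h ≤ m - r - 1),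
        ∑ i : Fin n, (algebraMap (ZMod 2) (GaloisField 2 m)) (c i) * α ^ (h * (i : ℕ)) = 0 := by
      intro h hh
      rw [← eval_cpoly (algebraMap (ZMod 2) (GaloisField 2 m)) α c h]
      have hdvd2 : Polynomial.X - Polynomial.C (α ^ h)
          ∣ (∑ i : Fin n, Polynomial.monomial (i : ℕ) (c i)).map (algebraMap (ZMod 2) (GaloisField 2 m)) := by
        have hmemdvd : Polynomial.X - Polynomial.C (α ^ h) ∣ ∏ h ∈ (Finset.range n).filter
            (fun h => 1 ≤ wt2 h ∧ wt2 h ≤ m - r - 1), (Polynomial.X - Polynomial.C (α ^ h)) :=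
          Finset.dvd_prod_of_mem (fun h => Polynomial.X - Polynomial.C (α ^ h)) hh
        refine dvd_trans hmemdvd ?_
        rw [← hg₂]
        exact Polynomial.map_dvd ((algebraMap (ZMod 2) (GaloisField 2 m))) hdvd
      exact Polynomial.dvd_iff_isRoot.mp hdvd2
    have hall : ∀ h : ℕ, 1 ≤ wt2 h → wt2 h ≤ m - r - 1 →
        ∑ i : Fin n, (algebraMap (ZMod 2) (GaloisField 2 m)) (c i) * α ^ (h * (i : ℕ)) = 0 := by
      intro h hw1 hw2
      have hmod := wt2_mod (m := m) (h := h) hm (by omega) (by omega)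
      have hmem : h % n ∈ (Finset.range n).filter
          (fun h => 1 ≤ wt2 h ∧ wt2 h ≤ m - r - 1) := by
        rw [Finset.mem_filter, Finset.mem_range, hn]
        refine ⟨hmod.2.1, wt2_pos hmod.1, le_trans hmod.2.2 hw2⟩
      have hDh := hD (h % n) hmem
      have hre : ∀ i : Fin n, (algebraMap (ZMod 2) (GaloisField 2 m)) (c i) * α ^ (h * (i : ℕ))
          = (algebraMap (ZMod 2) (GaloisField 2 m)) (c i) * α ^ (h % n * (i : ℕ)) := by
        intro i
        congr 1
        conv_lhs => rw [← pow_mod_orderOf]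
        conv_rhs => rw [← pow_mod_orderOf]
        rw [hα]
        congr 1
        exact (Nat.mod_mul_mod _ _ _).symm
      rw [Finset.sum_congr rfl (fun i _ => hre i)]
      exact hDh
    have hmem : c ∈ {c : Fin n → ZMod 2 | ∃ f : MvPolynomial (Fin m) (ZMod 2),
        IsMultilinear f ∧ f.totalDegree ≤ r ∧
        ∀ i : Fin n, c i = MvPolynomial.eval (coords (α ^ (i : ℕ))) f} := by
      rw [hset]
      exact hall
    exact hmem
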